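/- arXiv:1301.6628 — 2 statements merged into one kernel-verified Lean document; each statement's English description precedes it below -/
import Mathlib

section
/- Let f ∈ ℝ^E be a feasible flow and e ∈ E∖T an off-tree edge. Then ξ_r(f − (Δ_e(f)/R_e)c_e) − ξ_r(f) = −Δ_e(f)²/R_e, where Δ_e(f) = fᵀRc_e and R_e = c_eᵀRc_e. -/
open Matrix BigOperators

/-- Energy decrease of a single cycle update: for a feasible flow `f` and the
tree cycle vector `c` of an off-tree edge `e`, updating
`f ↦ f - (Δ_e(f)/R_e) c` decreases the energy by exactly `Δ_e(f)²/R_e`,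
where `Δ_e(f) = fᵀ R c` and `R_e = cᵀ R c`. -/
theorem cycle_update_energy_decrease {V E : Type} [Fintype V] [Fintype E]
    [DecidableEq V] [DecidableEq E]
    (head tail : E → V) (hht : ∀ e, head e ≠ tail e)
    (hconn : (SimpleGraph.fromRel fun a b => ∃ e, head e = a ∧ tail e = b).Connected)
    (r : E → ℝ) (hr : ∀ e, 0 < r e)
    (B : Matrix E V ℝ)
    (hB : ∀ e v, B e v = if v = head e then (1 : ℝ) else if v = tail e then -1 else 0)
    (T : Finset E)
    (hT : (SimpleGraph.fromRel fun a b => ∃ e ∈ T, head e = a ∧ tail e = b).IsTree)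
    (e : E) (he : e ∉ T)
    (c : E → ℝ)
    (hc1 : c e = 1)
    (hc2 : ∀ e' ∉ T, e' ≠ e → c e' = 0)
    (hc3 : B.transpose.mulVec c = 0)
    (χ : V → ℝ) (f : E → ℝ) (hf : B.transpose.mulVec f = χ)
    (Δ Re : ℝ)
    (hΔ : Δ = f ⬝ᵥ (Matrix.diagonal r).mulVec c)
    (hRe : Re = c ⬝ᵥ (Matrix.diagonal r).mulVec c) :
    (f - (Δ / Re) • c) ⬝ᵥ (Matrix.diagonal r).mulVec (f - (Δ / Re) • c) -
        f ⬝ᵥ (Matrix.diagonal r).mulVec f = -(Δ ^ 2 / Re) := by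
  have hsym : ∀ u v : E → ℝ, u ⬝ᵥ (Matrix.diagonal r).mulVec v
      = v ⬝ᵥ (Matrix.diagonal r).mulVec u := by
    intro u v
    simp only [Matrix.mulVec_diagonal, dotProduct]
    exact Finset.sum_congr rfl fun i _ => by ring
  have hRepos : 0 < Re := by
    rw [hRe]
    have : c ⬝ᵥ (Matrix.diagonal r).mulVec c = ∑ i, r i * c i ^ 2 := by
      simp only [Matrix.mulVec_diagonal, dotProduct]
      exact Finset.sum_congr rfl fun i _ => by ring
    rw [this]
    have h1 : ∀ i ∈ Finset.univ, (0:ℝ) ≤ r i * c i ^ 2 :=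
      fun i _ => mul_nonneg (hr i).le (sq_nonneg _)
    have h2 : r e * c e ^ 2 = r e := by rw [hc1]; ring
    calc (0:ℝ) < r e * c e ^ 2 := by rw [h2]; exact hr e
    _ ≤ ∑ i, r i * c i ^ 2 := Finset.single_le_sum h1 (Finset.mem_univ e)
  have hRe0 : Re ≠ 0 := ne_of_gt hRepos
  have hcf : c ⬝ᵥ (Matrix.diagonal r).mulVec f = Δ := by rw [hΔ, hsym]
  rw [Matrix.mulVec_sub, Matrix.mulVec_smul, sub_dotProduct,
    smul_dotProduct, dotProduct_sub, dotProduct_sub,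
    dotProduct_smul, dotProduct_smul, hcf, ← hΔ, ← hRe,
    smul_eq_mul, smul_eq_mul, smul_eq_mul]
  field_simp
  ring
end

section
/- (Gremban-style reduction preserves approximate solutions) Let A = D₁ + A_p + A_n + D₂ be an SDD matrix, where A_p (resp. A_n) collects the positive (resp. negative) off-diagonal entries, D₁(i,i) = Σ_j |A(i,j)|, and D₂ = A − A_p − A_n − D₁ has nonnegative diagonal. Define the 2n×2n Laplacian Ã = [[D₁+D₂/2+A_n, −D₂/2−A_p],[−D₂/2−A_p, D₁+D₂/2+A_n]]. If (x̂₁, x̂₂) satisfies ‖(x̂₁,x̂₂) − (x₁,x₂)‖_Ã ≤ ε‖(x₁,x₂)‖_Ã for some exact solution Ã(x₁,x₂) = (b,−b), then x̂ = (x̂₁ − x̂₂)/2 satisfies ‖x̂ − x‖_A ≤ ε‖x‖_A, where x = (x₁ − x₂)/2 solves Ax = b. -/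
open Matrix BigOperators

/-- The Gremban-style reduction from SDD systems to Laplacian systems
preserves approximate solutions: if `(x̂₁, x̂₂)` is an `ε`-approximate solution
(in the `Ã`-norm) to the `2n × 2n` Laplacian system `Ã (x₁,x₂) = (b,-b)`,
then `x̂ = (x̂₁ - x̂₂)/2` is an `ε`-approximate solution (in the `A`-norm) to
`A x = b`, where `x = (x₁ - x₂)/2` is an exact solution. -/
theorem gremban_reduction {n : ℕ}
    (A : Matrix (Fin n) (Fin n) ℝ) (hsym : A.IsSymm)
    (hdd : ∀ i, ∑ j ∈ Finset.univ.erase i, |A i j| ≤ A i i)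
    (Ap An D1 D2 : Matrix (Fin n) (Fin n) ℝ)
    (hAp : ∀ i j, Ap i j = if i ≠ j ∧ 0 < A i j then A i j else 0)
    (hAn : ∀ i j, An i j = if i ≠ j ∧ A i j < 0 then A i j else 0)
    (hD1 : D1 = Matrix.diagonal fun i => ∑ j, |A i j|)
    (hD2 : D2 = A - Ap - An - D1)
    (Atil : Matrix (Fin n ⊕ Fin n) (Fin n ⊕ Fin n) ℝ)
    (hAtil : Atil = Matrix.fromBlocks
      (D1 + (1 / 2 : ℝ) • D2 + An) (-(1 / 2 : ℝ) • D2 - Ap)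
      (-(1 / 2 : ℝ) • D2 - Ap) (D1 + (1 / 2 : ℝ) • D2 + An))
    (b x1 x2 xh1 xh2 : Fin n → ℝ) (ε : ℝ)
    (hexact : Atil.mulVec (Sum.elim x1 x2) = Sum.elim b (-b))
    (happrox :
      Real.sqrt ((Sum.elim xh1 xh2 - Sum.elim x1 x2) ⬝ᵥ
          Atil.mulVec (Sum.elim xh1 xh2 - Sum.elim x1 x2)) ≤
        ε * Real.sqrt (Sum.elim x1 x2 ⬝ᵥ Atil.mulVec (Sum.elim x1 x2))) :
    A.mulVec ((1 / 2 : ℝ) • (x1 - x2)) = b ∧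
      Real.sqrt (((1 / 2 : ℝ) • (xh1 - xh2) - (1 / 2 : ℝ) • (x1 - x2)) ⬝ᵥ
          A.mulVec ((1 / 2 : ℝ) • (xh1 - xh2) - (1 / 2 : ℝ) • (x1 - x2))) ≤
        ε * Real.sqrt ((1 / 2 : ℝ) • (x1 - x2) ⬝ᵥ
          A.mulVec ((1 / 2 : ℝ) • (x1 - x2))) := by
  classical
  set M : Matrix (Fin n) (Fin n) ℝ := D1 + (1 / 2 : ℝ) • D2 + An with hM
  set B : Matrix (Fin n) (Fin n) ℝ := -(1 / 2 : ℝ) • D2 - Ap with hB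
  -- entrywise symmetry of A
  have habs : ∀ i j : Fin n, |A i j| = |A j i| := fun i j => by
    rw [hsym.apply i j]
  -- symmetry of the pieces
  have hApsymm : Ap.IsSymm := Matrix.IsSymm.ext fun i j => by
    rw [hAp, hAp, hsym.apply i j]
    simp [ne_comm]
  have hAnsymm : An.IsSymm := Matrix.IsSymm.ext fun i j => by
    rw [hAn, hAn, hsym.apply i j]
    simp [ne_comm]
  have hD1symm : D1.IsSymm := hD1 ▸ Matrix.isSymm_diagonal _
  have hD2symm : D2.IsSymm := hD2 ▸ (((hsym.sub hApsymm).sub hAnsymm).sub hD1symm)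
  have hMsymm : M.IsSymm := (hD1symm.add (hD2symm.smul _)).add hAnsymm
  have hBsymm : B.IsSymm := (hD2symm.smul _).sub hApsymm
  -- bilinear symmetry
  have hbil : ∀ (C : Matrix (Fin n) (Fin n) ℝ), C.IsSymm →
      ∀ p q : Fin n → ℝ, p ⬝ᵥ C.mulVec q = q ⬝ᵥ C.mulVec p := by
    intro C hC p q
    rw [Matrix.dotProduct_mulVec]
    conv_lhs => rw [← hC.eq]
    rw [Matrix.vecMul_transpose, dotProduct_comm]
  -- matrix identities
  have hMB : M - B = A := by
    rw [hM, hB, hD2]; module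
  have hMBL : M + B = D1 + An - Ap := by
    rw [hM, hB, hD2]; module
  -- components of the exact equation
  have hexact' := hexact
  rw [hAtil, Matrix.fromBlocks_mulVec] at hexact'
  have hb1 : M.mulVec x1 + B.mulVec x2 = b := by
    funext i
    have := congrFun hexact' (Sum.inl i)
    simpa using this
  have hb2 : B.mulVec x1 + M.mulVec x2 = -b := by
    funext i
    have := congrFun hexact' (Sum.inr i)
    simpa using this
  -- part 1 : exact solution
  have hsolve : A.mulVec ((1 / 2 : ℝ) • (x1 - x2)) = b := by
    rw [Matrix.mulVec_smul, ← hMB]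
    funext i
    have h1 := congrFun hb1 i
    have h2 := congrFun hb2 i
    simp only [Matrix.sub_mulVec, Matrix.mulVec_sub, Pi.add_apply, Pi.sub_apply,
      Pi.neg_apply, Pi.smul_apply, smul_eq_mul] at h1 h2 ⊢
    linarith
  refine ⟨hsolve, ?_⟩
  -- PSD of the Laplacian L = D1 + An - Ap
  have hLpsd : ∀ z : Fin n → ℝ, 0 ≤ z ⬝ᵥ (D1 + An - Ap).mulVec z := by
    intro z
    have hAnp : ∀ i j, An i j - Ap i j
        = -|A i j| + (if j = i then |A i j| else 0) := by
      intro i j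
      rw [hAn, hAp]
      by_cases h : i = j
      · subst h; simp
      · rcases lt_trichotomy (A i j) 0 with h1 | h1 | h1
        · simp [h, Ne.symm h, h1, not_lt.mpr h1.le, abs_of_neg h1]
        · simp [h, Ne.symm h, h1]
        · simp [h, Ne.symm h, h1, not_lt.mpr h1.le, abs_of_pos h1]
    have t1 : z ⬝ᵥ D1.mulVec z = ∑ i, ∑ j, |A i j| * z i ^ 2 := by
      rw [hD1]
      simp only [dotProduct, Matrix.mulVec_diagonal]
      refine Finset.sum_congr rfl fun i _ => ?_
      rw [Finset.sum_mul, Finset.mul_sum]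
      exact Finset.sum_congr rfl fun j _ => by ring
    have t2 : z ⬝ᵥ (An - Ap).mulVec z
        = -(∑ i, ∑ j, |A i j| * (z i * z j)) + ∑ i, |A i i| * z i ^ 2 := by
      have step : ∀ i j, z i * ((An - Ap) i j * z j)
          = -(|A i j| * (z i * z j)) + (if j = i then |A i i| * z i ^ 2 else 0) := by
        intro i j
        rw [Matrix.sub_apply, hAnp i j]
        by_cases h : j = i
        · subst h; simp; ring
        · simp [h]; ring
      calc z ⬝ᵥ (An - Ap).mulVec z
          = ∑ i, ∑ j, z i * ((An - Ap) i j * z j) := by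
            simp [dotProduct, Matrix.mulVec, Finset.mul_sum]
        _ = ∑ i, ∑ j, (-(|A i j| * (z i * z j))
              + (if j = i then |A i i| * z i ^ 2 else 0)) := by
            exact Finset.sum_congr rfl fun i _ =>
              Finset.sum_congr rfl fun j _ => step i j
        _ = -(∑ i, ∑ j, |A i j| * (z i * z j)) + ∑ i, |A i i| * z i ^ 2 := by
            simp [Finset.sum_add_distrib, Finset.sum_ite_eq, Finset.sum_neg_distrib]
    have swap : ∑ i, ∑ j, |A i j| * z j ^ 2 = ∑ i, ∑ j, |A i j| * z i ^ 2 := by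
      rw [Finset.sum_comm]
      exact Finset.sum_congr rfl fun i _ =>
        Finset.sum_congr rfl fun j _ => by rw [habs]
    have hsq : 0 ≤ ∑ i, ∑ j, |A i j| * (z i - z j) ^ 2 := by positivity
    have hexp : ∑ i, ∑ j, |A i j| * (z i - z j) ^ 2
        = (∑ i, ∑ j, |A i j| * z i ^ 2) + (∑ i, ∑ j, |A i j| * z j ^ 2)
          - 2 * (∑ i, ∑ j, |A i j| * (z i * z j)) := by
      rw [Finset.mul_sum, ← Finset.sum_add_distrib, ← Finset.sum_sub_distrib]
      refine Finset.sum_congr rfl fun i _ => ?_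
      rw [Finset.mul_sum, ← Finset.sum_add_distrib, ← Finset.sum_sub_distrib]
      exact Finset.sum_congr rfl fun j _ => by ring
    have hdiag : 0 ≤ ∑ i, |A i i| * z i ^ 2 := by positivity
    have hsplit : z ⬝ᵥ (D1 + An - Ap).mulVec z
        = z ⬝ᵥ D1.mulVec z + z ⬝ᵥ (An - Ap).mulVec z := by
      rw [show D1 + An - Ap = D1 + (An - Ap) by abel]
      rw [Matrix.add_mulVec, dotProduct_add]
    rw [hsplit, t1, t2]
    linarith
  -- quadratic form of Atil on Sum.elim p q
  have hquad : ∀ p q : Fin n → ℝ,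
      Sum.elim p q ⬝ᵥ Atil.mulVec (Sum.elim p q)
        = p ⬝ᵥ M.mulVec p + p ⬝ᵥ B.mulVec q + q ⬝ᵥ B.mulVec p + q ⬝ᵥ M.mulVec q := by
    intro p q
    rw [hAtil, Matrix.fromBlocks_mulVec, sumElim_dotProduct_sumElim]
    simp only [Sum.elim_comp_inl, Sum.elim_comp_inr, dotProduct_add]
    ring
  -- key inequality
  have hkey : ∀ p q : Fin n → ℝ,
      (1 / 2 : ℝ) * ((p - q) ⬝ᵥ A.mulVec (p - q))
        ≤ Sum.elim p q ⬝ᵥ Atil.mulVec (Sum.elim p q) := by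
    intro p q
    rw [hquad p q, ← hMB]
    have hL := hLpsd (p + q)
    rw [← hMBL] at hL
    simp only [Matrix.sub_mulVec, Matrix.mulVec_sub, Matrix.add_mulVec,
      Matrix.mulVec_add, dotProduct_sub, sub_dotProduct,
      dotProduct_add, add_dotProduct] at hL ⊢
    have e1 := hbil M hMsymm p q
    have e2 := hbil B hBsymm p q
    linarith
  -- norm of the exact solution
  have hx2 : Sum.elim x1 x2 ⬝ᵥ Atil.mulVec (Sum.elim x1 x2)
      = 2 * (((1 / 2 : ℝ) • (x1 - x2)) ⬝ᵥ
          A.mulVec ((1 / 2 : ℝ) • (x1 - x2))) := by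
    rw [hexact, sumElim_dotProduct_sumElim, dotProduct_neg,
      ← hsolve]
    have key : ∀ y : Fin n → ℝ,
        x1 ⬝ᵥ y + -(x2 ⬝ᵥ y) = 2 * (((1 / 2 : ℝ) • (x1 - x2)) ⬝ᵥ y) := by
      intro y
      rw [smul_dotProduct, sub_dotProduct, smul_eq_mul]
      ring
    exact key _
  -- assemble
  have hz : Sum.elim xh1 xh2 - Sum.elim x1 x2
      = Sum.elim (xh1 - x1) (xh2 - x2) := by
    funext i; cases i <;> simp
  rw [hz, hx2] at happrox
  have hd : (1 / 2 : ℝ) • (xh1 - xh2) - (1 / 2 : ℝ) • (x1 - x2)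
      = (1 / 2 : ℝ) • ((xh1 - x1) - (xh2 - x2)) := by
    funext i; simp; ring
  rw [hd]
  set w : Fin n → ℝ := (xh1 - x1) - (xh2 - x2) with hw
  have hquart : ((1 / 2 : ℝ) • w) ⬝ᵥ A.mulVec ((1 / 2 : ℝ) • w)
      = (1 / 4 : ℝ) * (w ⬝ᵥ A.mulVec w) := by
    rw [Matrix.mulVec_smul, smul_dotProduct, dotProduct_smul]
    simp [smul_eq_mul]; ring
  rw [hquart]
  have hkuv := hkey (xh1 - x1) (xh2 - x2)
  have step1 : Real.sqrt (2 * ((1 / 4 : ℝ) * (w ⬝ᵥ A.mulVec w)))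
      ≤ ε * Real.sqrt (2 * (((1 / 2 : ℝ) • (x1 - x2)) ⬝ᵥ
          A.mulVec ((1 / 2 : ℝ) • (x1 - x2)))) := by
    refine le_trans (Real.sqrt_le_sqrt ?_) happrox
    rw [hw]; linarith
  have h2 : (0 : ℝ) ≤ 2 := by norm_num
  rw [Real.sqrt_mul h2, Real.sqrt_mul h2] at step1
  have hs2 : (0 : ℝ) < Real.sqrt 2 := Real.sqrt_pos.mpr (by norm_num)
  nlinarith [step1, hs2, Real.sqrt_nonneg ((1 / 4 : ℝ) * (w ⬝ᵥ A.mulVec w)),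
    Real.sqrt_nonneg (((1 / 2 : ℝ) • (x1 - x2)) ⬝ᵥ
      A.mulVec ((1 / 2 : ℝ) • (x1 - x2)))]
end
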